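/- Assume every entry of A lies in [−1, 1], let μ > 0, set P = m + n and C₀ = 2P² + 3μP + P + μ, fix a reference r ∈ Δ_m × Δ_n and let σ* = (x*, y*) be the unique saddle point of f_r. Let 0 < η < 2μ/C₀² and set C₁ = 2ημ − (ηC₀)². Consider the dynamics σ^t_i = θ^t_i/‖θ^t_i‖₁, θ^{t+1}_i = max(θ^t_i + η·m_i(σ^t), 0) (i ∈ {0,1}) with nonnegative nonzero initial blocks, and assume θ^t_i ≠ 0 for all t. Define the potential Φ(θ) = min_{k ≥ 1} ½‖k·σ* − θ‖₂² + η·⟨−m(σ*), θ⟩ for θ ∈ ℝ^{m+n}_{≥0}. Then for every t ≥ 1, Φ(θ^{t+1}) ≤ Φ(θ^t) − C₁·½‖σ* − σ^t‖₂². -/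

import Mathlib

open Finset

/-- Squared Euclidean norm of a vector in `ℝ^d`. -/
noncomputable def sqnorm {d : ℕ} (v : Fin d → ℝ) : ℝ := ∑ i, (v i) ^ 2

/-- Euclidean norm `‖·‖₂` of a vector in `ℝ^d`. -/
noncomputable def enorm2 {d : ℕ} (v : Fin d → ℝ) : ℝ := Real.sqrt (sqnorm v)

/-- Euclidean inner product on `ℝ^d`. -/
noncomputable def ip {d : ℕ} (u v : Fin d → ℝ) : ℝ := ∑ i, u i * v i

/-- The max-player's payoff `⟨x, A y⟩` in the two-player zero-sum game with payoff matrix `A`. -/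
noncomputable def pay {m n : ℕ} (A : Matrix (Fin m) (Fin n) ℝ)
    (x : Fin m → ℝ) (y : Fin n → ℝ) : ℝ := ip x (A.mulVec y)

/-- The regularized objective `f_r(x,y) = ⟨x, A y⟩ + (μ/2)‖x − r₀‖₂² − (μ/2)‖y − r₁‖₂²`. -/
noncomputable def freg {m n : ℕ} (A : Matrix (Fin m) (Fin n) ℝ) (μ : ℝ)
    (r₀ : Fin m → ℝ) (r₁ : Fin n → ℝ) (x : Fin m → ℝ) (y : Fin n → ℝ) : ℝ :=
  pay A x y + (μ / 2) * sqnorm (x - r₀) - (μ / 2) * sqnorm (y - r₁)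

/-- `(xs, ys)` is a saddle point of `f_r` on `Δ_m × Δ_n`. -/
def IsSaddle {m n : ℕ} (A : Matrix (Fin m) (Fin n) ℝ) (μ : ℝ)
    (r₀ : Fin m → ℝ) (r₁ : Fin n → ℝ) (xs : Fin m → ℝ) (ys : Fin n → ℝ) : Prop :=
  xs ∈ stdSimplex ℝ (Fin m) ∧ ys ∈ stdSimplex ℝ (Fin n) ∧
  ∀ x ∈ stdSimplex ℝ (Fin m), ∀ y ∈ stdSimplex ℝ (Fin n),
    freg A μ r₀ r₁ xs y ≤ freg A μ r₀ r₁ xs ys ∧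
    freg A μ r₀ r₁ xs ys ≤ freg A μ r₀ r₁ x ys

/-- Regularized loss gradient of the min-player at profile `σ = (x, y)`:
`ℓ₀(σ) = A y + μ(x − r₀)`. -/
noncomputable def ell0 {m n : ℕ} (A : Matrix (Fin m) (Fin n) ℝ) (μ : ℝ)
    (r₀ : Fin m → ℝ) (σ : (Fin m → ℝ) × (Fin n → ℝ)) : Fin m → ℝ :=
  A.mulVec σ.2 + μ • (σ.1 - r₀)

/-- Regularized loss gradient of the max-player at profile `σ = (x, y)`:
`ℓ₁(σ) = −Aᵀ x + μ(y − r₁)`. -/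
noncomputable def ell1 {m n : ℕ} (A : Matrix (Fin m) (Fin n) ℝ) (μ : ℝ)
    (r₁ : Fin n → ℝ) (σ : (Fin m → ℝ) × (Fin n → ℝ)) : Fin n → ℝ :=
  -(A.transpose.mulVec σ.1) + μ • (σ.2 - r₁)

/-- `m₀(σ) = ⟨ℓ₀(σ), x⟩·𝟙 − ℓ₀(σ)`. -/
noncomputable def mvec0 {m n : ℕ} (A : Matrix (Fin m) (Fin n) ℝ) (μ : ℝ)
    (r₀ : Fin m → ℝ) (σ : (Fin m → ℝ) × (Fin n → ℝ)) : Fin m → ℝ :=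
  (ip (ell0 A μ r₀ σ) σ.1) • (1 : Fin m → ℝ) - ell0 A μ r₀ σ

/-- `m₁(σ) = ⟨ℓ₁(σ), y⟩·𝟙 − ℓ₁(σ)`. -/
noncomputable def mvec1 {m n : ℕ} (A : Matrix (Fin m) (Fin n) ℝ) (μ : ℝ)
    (r₁ : Fin n → ℝ) (σ : (Fin m → ℝ) × (Fin n → ℝ)) : Fin n → ℝ :=
  (ip (ell1 A μ r₁ σ) σ.2) • (1 : Fin n → ℝ) - ell1 A μ r₁ σ

/-- The strategy profile obtained by `ℓ₁`-normalizing each block of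
the regret vector `θ`: `σ_i = θ_i / ‖θ_i‖₁`. -/
noncomputable def strat {m n : ℕ} (θ : (Fin m → ℝ) × (Fin n → ℝ)) :
    (Fin m → ℝ) × (Fin n → ℝ) :=
  ((∑ i, |θ.1 i|)⁻¹ • θ.1, (∑ j, |θ.2 j|)⁻¹ • θ.2)

/-- The RM+ Lyapunov potential
`Φ(θ) = min_{k ≥ 1} ½‖k·σ* − θ‖₂² + η⟨−m(σ*), θ⟩` (the minimum is attained, so it equals
the infimum used here). -/
noncomputable def Phi {m n : ℕ} (A : Matrix (Fin m) (Fin n) ℝ) (μ : ℝ)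
    (r₀ : Fin m → ℝ) (r₁ : Fin n → ℝ) (η : ℝ)
    (xs : Fin m → ℝ) (ys : Fin n → ℝ) (θ : (Fin m → ℝ) × (Fin n → ℝ)) : ℝ :=
  sInf {v : ℝ | ∃ k : ℝ, 1 ≤ k ∧
      v = (1 / 2) * (sqnorm (k • xs - θ.1) + sqnorm (k • ys - θ.2))} +
    η * (ip (-(mvec0 A μ r₀ (xs, ys))) θ.1 + ip (-(mvec1 A μ r₁ (xs, ys))) θ.2)

section toolkit
variable {d : ℕ} (u v w : Fin d → ℝ)

lemma sqnorm_nonneg : 0 ≤ sqnorm v := Finset.sum_nonneg fun i _ => sq_nonneg _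

lemma enorm2_nonneg : 0 ≤ enorm2 v := Real.sqrt_nonneg _

lemma enorm2_sq : enorm2 v ^ 2 = sqnorm v := Real.sq_sqrt (sqnorm_nonneg v)

lemma ip_comm : ip u v = ip v u := by
  simp [ip, mul_comm]

lemma ip_self : ip v v = sqnorm v := by
  simp [ip, sqnorm, sq]

lemma ip_add_right : ip u (v + w) = ip u v + ip u w := by
  simp [ip, mul_add, Finset.sum_add_distrib]

lemma ip_sub_right : ip u (v - w) = ip u v - ip u w := by
  simp [ip, mul_sub, Finset.sum_sub_distrib]

lemma ip_add_left : ip (u + v) w = ip u w + ip v w := by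
  simp [ip, add_mul, Finset.sum_add_distrib]

lemma ip_sub_left : ip (u - v) w = ip u w - ip v w := by
  simp [ip, sub_mul, Finset.sum_sub_distrib]

lemma ip_smul_left (c : ℝ) : ip (c • u) v = c * ip u v := by
  simp [ip, Finset.mul_sum, mul_assoc]

lemma ip_smul_right (c : ℝ) : ip u (c • v) = c * ip u v := by
  simp [ip, Finset.mul_sum]; exact Finset.sum_congr rfl fun i _ => by ring

lemma ip_neg_left : ip (-u) v = -ip u v := by
  simp [ip, Finset.sum_neg_distrib]

lemma sqnorm_sub_expand : sqnorm (u - v) = sqnorm u - 2 * ip u v + sqnorm v := by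
  have h : ∀ i : Fin d, (u i - v i) ^ 2 = u i ^ 2 - 2 * (u i * v i) + v i ^ 2 :=
    fun i => by ring
  simp only [sqnorm, ip, Pi.sub_apply, h, Finset.sum_add_distrib, Finset.sum_sub_distrib,
    Finset.mul_sum]

lemma sqnorm_add_expand : sqnorm (u + v) = sqnorm u + 2 * ip u v + sqnorm v := by
  have h : ∀ i : Fin d, (u i + v i) ^ 2 = u i ^ 2 + 2 * (u i * v i) + v i ^ 2 :=
    fun i => by ring
  simp only [sqnorm, ip, Pi.add_apply, h, Finset.sum_add_distrib, Finset.mul_sum]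

lemma sqnorm_smul (c : ℝ) : sqnorm (c • v) = c ^ 2 * sqnorm v := by
  simp [sqnorm, Finset.mul_sum, mul_pow]

lemma cauchy_ip : (ip u v) ^ 2 ≤ sqnorm u * sqnorm v :=
  Finset.sum_mul_sq_le_sq_mul_sq _ _ _

lemma abs_ip_le : |ip u v| ≤ enorm2 u * enorm2 v := by
  have h := cauchy_ip u v
  calc |ip u v| = Real.sqrt ((ip u v) ^ 2) := by
        rw [Real.sqrt_sq_eq_abs]
    _ ≤ Real.sqrt (sqnorm u * sqnorm v) := Real.sqrt_le_sqrt h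
    _ = enorm2 u * enorm2 v := by
        rw [enorm2, enorm2, Real.sqrt_mul (sqnorm_nonneg u)]

lemma ip_le_enorm2 : ip u v ≤ enorm2 u * enorm2 v :=
  (le_abs_self _).trans (abs_ip_le u v)

lemma ip_le_half_sq : ip u v ≤ (1/2) * sqnorm u + (1/2) * sqnorm v := by
  have h := sqnorm_nonneg (u - v)
  rw [sqnorm_sub_expand] at h
  linarith

lemma enorm2_add_le : enorm2 (u + v) ≤ enorm2 u + enorm2 v := by
  have h1 : sqnorm (u + v) ≤ (enorm2 u + enorm2 v) ^ 2 := by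
    rw [sqnorm_add_expand]
    have := ip_le_enorm2 u v
    have hu := enorm2_sq u; have hv := enorm2_sq v
    nlinarith
  calc enorm2 (u + v) = Real.sqrt (sqnorm (u + v)) := rfl
    _ ≤ Real.sqrt ((enorm2 u + enorm2 v) ^ 2) := Real.sqrt_le_sqrt h1
    _ = |enorm2 u + enorm2 v| := Real.sqrt_sq_eq_abs _
    _ = enorm2 u + enorm2 v := abs_of_nonneg (add_nonneg (enorm2_nonneg u) (enorm2_nonneg v))

lemma enorm2_le_of_sqnorm_le {c : ℝ} (hc : 0 ≤ c) (h : sqnorm v ≤ c ^ 2) :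
    enorm2 v ≤ c := by
  calc enorm2 v ≤ Real.sqrt (c ^ 2) := Real.sqrt_le_sqrt h
    _ = c := by rw [Real.sqrt_sq hc]

lemma sqnorm_le_of_enorm2_le {c : ℝ} (h : enorm2 v ≤ c) : sqnorm v ≤ c ^ 2 := by
  have := enorm2_sq v
  nlinarith [enorm2_nonneg v]

lemma enorm2_smul (c : ℝ) : enorm2 (c • v) = |c| * enorm2 v := by
  rw [enorm2, sqnorm_smul, Real.sqrt_mul (sq_nonneg c), Real.sqrt_sq_eq_abs]; rfl

end toolkit

section chunk2
variable {m n : ℕ}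

lemma ip_one_right {d : ℕ} (u : Fin d → ℝ) : ip u (1 : Fin d → ℝ) = ∑ i, u i := by
  simp [ip]

lemma mem_simplex_iff {d : ℕ} (x : Fin d → ℝ) :
    x ∈ stdSimplex ℝ (Fin d) ↔ (∀ i, 0 ≤ x i) ∧ ∑ i, x i = 1 := Iff.rfl

lemma sqnorm_le_one_of_simplex {d : ℕ} {x : Fin d → ℝ} (hx : x ∈ stdSimplex ℝ (Fin d)) :
    sqnorm x ≤ 1 := by
  have h1 : ∀ i : Fin d, x i ≤ 1 := by
    intro i
    calc x i ≤ ∑ j, x j := Finset.single_le_sum (fun j _ => hx.1 j) (Finset.mem_univ i)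
      _ = 1 := hx.2
  calc sqnorm x = ∑ i, (x i) ^ 2 := rfl
    _ ≤ ∑ i, x i := Finset.sum_le_sum fun i _ => by nlinarith [hx.1 i, h1 i]
    _ = 1 := hx.2

lemma enorm2_le_one_of_simplex {d : ℕ} {x : Fin d → ℝ} (hx : x ∈ stdSimplex ℝ (Fin d)) :
    enorm2 x ≤ 1 :=
  enorm2_le_of_sqnorm_le x one_pos.le (by simpa using sqnorm_le_one_of_simplex hx)

lemma ip_nonneg_of_nonneg {d : ℕ} {u v : Fin d → ℝ} (hu : ∀ i, 0 ≤ u i) (hv : ∀ i, 0 ≤ v i) :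
    0 ≤ ip u v := Finset.sum_nonneg fun i _ => mul_nonneg (hu i) (hv i)

lemma sqnorm_sub_le_two_of_simplex {d : ℕ} {x r : Fin d → ℝ}
    (hx : x ∈ stdSimplex ℝ (Fin d)) (hr : r ∈ stdSimplex ℝ (Fin d)) :
    sqnorm (x - r) ≤ 2 := by
  rw [sqnorm_sub_expand]
  have := sqnorm_le_one_of_simplex hx
  have := sqnorm_le_one_of_simplex hr
  have := ip_nonneg_of_nonneg hx.1 hr.1
  linarith

lemma ip_mulVec_swap (A : Matrix (Fin m) (Fin n) ℝ) (x : Fin m → ℝ) (y : Fin n → ℝ) :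
    ip x (A.mulVec y) = ip (A.transpose.mulVec x) y := by
  simp only [ip, Matrix.mulVec, dotProduct, Matrix.transpose_apply, Finset.mul_sum,
    Finset.sum_mul]
  rw [Finset.sum_comm]
  exact Finset.sum_congr rfl fun j _ => Finset.sum_congr rfl fun i _ => by ring

lemma sqnorm_mulVec_le (A : Matrix (Fin m) (Fin n) ℝ)
    (hA : ∀ i j, A i j ∈ Set.Icc (-1 : ℝ) 1) (v : Fin n → ℝ) :
    sqnorm (A.mulVec v) ≤ (m * n : ℝ) * sqnorm v := by
  have h : ∀ i : Fin m, (A.mulVec v i) ^ 2 ≤ (n : ℝ) * sqnorm v := by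
    intro i
    have hcs := Finset.sum_mul_sq_le_sq_mul_sq Finset.univ (fun j => A i j) v
    have hb : (∑ j, (A i j) ^ 2) ≤ (n : ℝ) := by
      calc (∑ j, (A i j) ^ 2) ≤ ∑ _j : Fin n, (1 : ℝ) := by
            refine Finset.sum_le_sum fun j _ => ?_
            have h1 := (hA i j).1; have h2 := (hA i j).2
            nlinarith
        _ = (n : ℝ) := by simp
    calc (A.mulVec v i) ^ 2 = (∑ j, A i j * v j) ^ 2 := by
          simp [Matrix.mulVec, dotProduct]
      _ ≤ (∑ j, (A i j) ^ 2) * ∑ j, (v j) ^ 2 := hcs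
      _ ≤ (n : ℝ) * sqnorm v := by
          have := sqnorm_nonneg v
          exact mul_le_mul_of_nonneg_right hb this
  calc sqnorm (A.mulVec v) = ∑ i, (A.mulVec v i) ^ 2 := rfl
    _ ≤ ∑ _i : Fin m, (n : ℝ) * sqnorm v := Finset.sum_le_sum fun i _ => h i
    _ = (m * n : ℝ) * sqnorm v := by simp [mul_assoc]

lemma sqnorm_mulVec_simplex_le (A : Matrix (Fin m) (Fin n) ℝ)
    (hA : ∀ i j, A i j ∈ Set.Icc (-1 : ℝ) 1) {y : Fin n → ℝ}
    (hy : y ∈ stdSimplex ℝ (Fin n)) :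
    sqnorm (A.mulVec y) ≤ (m : ℝ) := by
  have h : ∀ i : Fin m, (A.mulVec y i) ^ 2 ≤ 1 := by
    intro i
    have habs : |A.mulVec y i| ≤ 1 := by
      have : A.mulVec y i = ∑ j, A i j * y j := by simp [Matrix.mulVec, dotProduct]
      rw [this]
      calc |∑ j, A i j * y j| ≤ ∑ j, |A i j * y j| := Finset.abs_sum_le_sum_abs _ _
        _ ≤ ∑ j, y j := by
            refine Finset.sum_le_sum fun j _ => ?_
            rw [abs_mul, abs_of_nonneg (hy.1 j)]
            have h1 := (hA i j).1; have h2 := (hA i j).2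
            have : |A i j| ≤ 1 := abs_le.2 ⟨h1, h2⟩
            nlinarith [hy.1 j]
        _ = 1 := hy.2
    nlinarith [abs_nonneg (A.mulVec y i), sq_abs (A.mulVec y i)]
  calc sqnorm (A.mulVec y) = ∑ i, (A.mulVec y i) ^ 2 := rfl
    _ ≤ ∑ _i : Fin m, (1 : ℝ) := Finset.sum_le_sum fun i _ => h i
    _ = (m : ℝ) := by simp

lemma nonneg_of_small_pos (c q : ℝ) (hq : 0 ≤ q)
    (h : ∀ l : ℝ, 0 < l → l ≤ 1 → 0 ≤ l * c + l ^ 2 * q) : 0 ≤ c := by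
  by_contra hc
  push_neg at hc
  set l : ℝ := min 1 (-c / (2 * (q + 1))) with hl
  have hl1 : l ≤ 1 := min_le_left _ _
  have hlpos : 0 < l := by
    apply lt_min one_pos
    have hc' : 0 < -c := by linarith
    positivity
  have h2 : l ≤ -c / (2 * (q + 1)) := min_le_right _ _
  have h3 := h l hlpos hl1
  have h4 : l * q ≤ -c / 2 := by
    rw [le_div_iff₀ (by positivity : (0:ℝ) < 2 * (q + 1))] at h2
    nlinarith
  nlinarith
end chunk2
section chunk3
variable {m n : ℕ} (A : Matrix (Fin m) (Fin n) ℝ) (μ : ℝ) (r₀ : Fin m → ℝ) (r₁ : Fin n → ℝ)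

lemma line_mem_simplex {d : ℕ} {x x' : Fin d → ℝ} (hx : x ∈ stdSimplex ℝ (Fin d))
    (hx' : x' ∈ stdSimplex ℝ (Fin d)) {l : ℝ} (h0 : 0 ≤ l) (h1 : l ≤ 1) :
    x + l • (x' - x) ∈ stdSimplex ℝ (Fin d) := by
  constructor
  · intro i
    have : (x + l • (x' - x)) i = (1 - l) * x i + l * x' i := by
      simp [Pi.add_apply]; ring
    rw [this]
    have := hx.1 i; have := hx'.1 i
    nlinarith
  · have : ∀ i, (x + l • (x' - x)) i = x i + l * (x' i - x i) := by
      intro i; simp [Pi.add_apply]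
    rw [Finset.sum_congr rfl (fun i _ => this i)]
    rw [Finset.sum_add_distrib, ← Finset.mul_sum, Finset.sum_sub_distrib]
    rw [hx.2, hx'.2]
    ring

lemma freg_line0 (xs x' : Fin m → ℝ) (ys : Fin n → ℝ) (l : ℝ) :
    freg A μ r₀ r₁ (xs + l • (x' - xs)) ys =
      freg A μ r₀ r₁ xs ys + l * ip (ell0 A μ r₀ (xs, ys)) (x' - xs) +
        l ^ 2 * (μ / 2) * sqnorm (x' - xs) := by
  set d := x' - xs with hd
  have h1 : xs + l • d - r₀ = (xs - r₀) + l • d := by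
    funext i; simp [Pi.add_apply]; ring
  simp only [freg, pay, ell0, h1]
  rw [ip_add_left, ip_smul_left, sqnorm_add_expand, sqnorm_smul, ip_smul_right]
  rw [ip_add_left, ip_smul_left]
  rw [ip_comm d (A.mulVec ys)]
  rw [ip_comm (xs - r₀) d]
  ring

lemma freg_line1 (xs : Fin m → ℝ) (ys y' : Fin n → ℝ) (l : ℝ) :
    freg A μ r₀ r₁ xs (ys + l • (y' - ys)) =
      freg A μ r₀ r₁ xs ys - l * ip (ell1 A μ r₁ (xs, ys)) (y' - ys) -
        l ^ 2 * (μ / 2) * sqnorm (y' - ys) := by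
  set e := y' - ys with he
  have h1 : ys + l • e - r₁ = (ys - r₁) + l • e := by
    funext i; simp [Pi.add_apply]; ring
  simp only [freg, pay, ell1, h1]
  rw [Matrix.mulVec_add, Matrix.mulVec_smul, ip_add_right, ip_smul_right]
  rw [sqnorm_add_expand, sqnorm_smul, ip_smul_right]
  rw [ip_add_left, ip_smul_left, ip_neg_left]
  simp only [ip_mulVec_swap]
  rw [ip_comm (ys - r₁) e]
  ring

lemma saddle_vi0 (hμ : 0 < μ) {xs : Fin m → ℝ} {ys : Fin n → ℝ}
    (hs : IsSaddle A μ r₀ r₁ xs ys) {x' : Fin m → ℝ} (hx' : x' ∈ stdSimplex ℝ (Fin m)) :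
    0 ≤ ip (ell0 A μ r₀ (xs, ys)) (x' - xs) := by
  apply nonneg_of_small_pos _ ((μ / 2) * sqnorm (x' - xs))
    (mul_nonneg (by linarith) (sqnorm_nonneg _))
  intro l hl0 hl1
  have hmem := line_mem_simplex hs.1 hx' hl0.le hl1
  have h := (hs.2.2 _ hmem ys hs.2.1).2
  rw [freg_line0 A μ r₀ r₁ xs x' ys l] at h
  nlinarith
  
lemma saddle_vi1 (hμ : 0 < μ) {xs : Fin m → ℝ} {ys : Fin n → ℝ}
    (hs : IsSaddle A μ r₀ r₁ xs ys) {y' : Fin n → ℝ} (hy' : y' ∈ stdSimplex ℝ (Fin n)) :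
    0 ≤ ip (ell1 A μ r₁ (xs, ys)) (y' - ys) := by
  apply nonneg_of_small_pos _ ((μ / 2) * sqnorm (y' - ys))
    (mul_nonneg (by linarith) (sqnorm_nonneg _))
  intro l hl0 hl1
  have hmem := line_mem_simplex hs.2.1 hy' hl0.le hl1
  have h := (hs.2.2 xs hs.1 _ hmem).1
  rw [freg_line1 A μ r₀ r₁ xs ys y' l] at h
  nlinarith

end chunk3
section chunk4
variable {m n : ℕ}

lemma enorm2_one (d : ℕ) : enorm2 (1 : Fin d → ℝ) = Real.sqrt d := by
  have : sqnorm (1 : Fin d → ℝ) = (d : ℝ) := by simp [sqnorm]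
  rw [enorm2, this]

lemma enorm2_neg {d : ℕ} (v : Fin d → ℝ) : enorm2 (-v) = enorm2 v := by
  have : -v = (-1 : ℝ) • v := by funext i; simp
  rw [this, enorm2_smul]; norm_num

lemma sqrt_le_self_of_one_le {x : ℝ} (hx : 1 ≤ x) : Real.sqrt x ≤ x := by
  have h1 : Real.sqrt x ^ 2 = x := Real.sq_sqrt (by linarith)
  have h2 : 1 ≤ Real.sqrt x := by
    have := Real.sqrt_le_sqrt hx
    simpa using this
  nlinarith

lemma sqrt_two_le : Real.sqrt 2 ≤ 3 / 2 := by
  have h1 : Real.sqrt 2 ^ 2 = 2 := Real.sq_sqrt (by norm_num)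
  nlinarith [Real.sqrt_nonneg 2]

set_option maxHeartbeats 1000000 in
lemma lipschitz_m (hm : 1 ≤ m) (hn : 1 ≤ n) (A : Matrix (Fin m) (Fin n) ℝ)
    (hA : ∀ i j, A i j ∈ Set.Icc (-1 : ℝ) 1) (μ : ℝ) (hμ : 0 < μ)
    (r₀ : Fin m → ℝ) (r₁ : Fin n → ℝ)
    (hr₀ : r₀ ∈ stdSimplex ℝ (Fin m)) (hr₁ : r₁ ∈ stdSimplex ℝ (Fin n))
    {x xs : Fin m → ℝ} {y ys : Fin n → ℝ}
    (hx : x ∈ stdSimplex ℝ (Fin m)) (hxs : xs ∈ stdSimplex ℝ (Fin m))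
    (hy : y ∈ stdSimplex ℝ (Fin n)) (hys : ys ∈ stdSimplex ℝ (Fin n)) :
    sqnorm (mvec0 A μ r₀ (x, y) - mvec0 A μ r₀ (xs, ys)) +
      sqnorm (mvec1 A μ r₁ (x, y) - mvec1 A μ r₁ (xs, ys)) ≤
    (2 * ((m:ℝ)+(n:ℝ)) ^ 2 + 3 * μ * ((m:ℝ)+(n:ℝ)) + ((m:ℝ)+(n:ℝ)) + μ) ^ 2 *
      (sqnorm (x - xs) + sqnorm (y - ys)) := by
  have hm' : (1:ℝ) ≤ (m:ℝ) := by exact_mod_cast hm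
  have hn' : (1:ℝ) ≤ (n:ℝ) := by exact_mod_cast hn
  set P : ℝ := (m:ℝ) + (n:ℝ) with hPdef
  have hP2 : (2:ℝ) ≤ P := by rw [hPdef]; linarith
  set a : ℝ := enorm2 (x - xs) with ha
  set b : ℝ := enorm2 (y - ys) with hb
  set s : ℝ := Real.sqrt (sqnorm (x - xs) + sqnorm (y - ys)) with hs
  have ha0 : 0 ≤ a := enorm2_nonneg _
  have hb0 : 0 ≤ b := enorm2_nonneg _
  have hs0 : 0 ≤ s := Real.sqrt_nonneg _
  have hssq : s ^ 2 = sqnorm (x - xs) + sqnorm (y - ys) :=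
    Real.sq_sqrt (add_nonneg (sqnorm_nonneg _) (sqnorm_nonneg _))
  have hasq : a ^ 2 = sqnorm (x - xs) := enorm2_sq _
  have hbsq : b ^ 2 = sqnorm (y - ys) := enorm2_sq _
  have has : a ≤ s := by
    rw [ha, hs, enorm2]
    exact Real.sqrt_le_sqrt (by linarith [sqnorm_nonneg (y - ys)])
  have hbs : b ≤ s := by
    rw [hb, hs, enorm2]
    exact Real.sqrt_le_sqrt (by linarith [sqnorm_nonneg (x - xs)])
  -- gradient differences
  set L₀ : Fin m → ℝ := A.mulVec (y - ys) + μ • (x - xs) with hL₀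
  set L₁ : Fin n → ℝ := -(A.transpose.mulVec (x - xs)) + μ • (y - ys) with hL₁
  have hL₀eq : ell0 A μ r₀ (x, y) - ell0 A μ r₀ (xs, ys) = L₀ := by
    funext i
    simp [ell0, hL₀, Matrix.mulVec_sub, Matrix.sub_mulVec]
    ring
  have hL₁eq : ell1 A μ r₁ (x, y) - ell1 A μ r₁ (xs, ys) = L₁ := by
    funext i
    simp [ell1, hL₁, Matrix.mulVec_sub, Matrix.sub_mulVec]
    ring
  have hmn : (m:ℝ) * n ≤ (P/2) ^ 2 := by
    have := sq_nonneg ((m:ℝ) - (n:ℝ))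
    rw [hPdef]; nlinarith only [sq_nonneg ((m:ℝ) - (n:ℝ))]
  have hAyn : enorm2 (A.mulVec (y - ys)) ≤ (P/2) * b := by
    apply enorm2_le_of_sqnorm_le _ (by positivity)
    calc sqnorm (A.mulVec (y - ys)) ≤ (m * n : ℝ) * sqnorm (y - ys) :=
          sqnorm_mulVec_le A hA _
      _ ≤ (P/2)^2 * b^2 := by rw [hbsq]; exact mul_le_mul_of_nonneg_right hmn (sqnorm_nonneg _)
      _ = ((P/2) * b)^2 := by ring
  have hAxn : enorm2 (A.transpose.mulVec (x - xs)) ≤ (P/2) * a := by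
    apply enorm2_le_of_sqnorm_le _ (by positivity)
    have hAt : ∀ j i, A.transpose j i ∈ Set.Icc (-1:ℝ) 1 := fun j i => hA i j
    calc sqnorm (A.transpose.mulVec (x - xs)) ≤ (n * m : ℝ) * sqnorm (x - xs) :=
          sqnorm_mulVec_le A.transpose hAt _
      _ ≤ (P/2)^2 * a^2 := by
          rw [hasq]
          refine mul_le_mul_of_nonneg_right ?_ (sqnorm_nonneg _)
          linarith [hmn, mul_comm (n:ℝ) (m:ℝ)]
      _ = ((P/2) * a)^2 := by ring
  have hL₀n : enorm2 L₀ ≤ (P/2) * b + μ * a := by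
    calc enorm2 L₀ ≤ enorm2 (A.mulVec (y - ys)) + enorm2 (μ • (x - xs)) := enorm2_add_le _ _
      _ = enorm2 (A.mulVec (y - ys)) + μ * a := by rw [enorm2_smul, abs_of_pos hμ]
      _ ≤ (P/2) * b + μ * a := by linarith
  have hL₁n : enorm2 L₁ ≤ (P/2) * a + μ * b := by
    calc enorm2 L₁ ≤ enorm2 (-(A.transpose.mulVec (x - xs))) + enorm2 (μ • (y - ys)) :=
          enorm2_add_le _ _
      _ = enorm2 (A.transpose.mulVec (x - xs)) + μ * b := by
          rw [enorm2_neg, enorm2_smul, abs_of_pos hμ]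
      _ ≤ (P/2) * a + μ * b := by linarith
  have hL₀n0 : 0 ≤ enorm2 L₀ := enorm2_nonneg _
  have hL₁n0 : 0 ≤ enorm2 L₁ := enorm2_nonneg _
  -- norms at the saddle point
  set sm : ℝ := Real.sqrt m with hsm
  set sn : ℝ := Real.sqrt n with hsn
  set s2 : ℝ := Real.sqrt 2 with hs2
  have hsm0 : 0 ≤ sm := Real.sqrt_nonneg _
  have hsn0 : 0 ≤ sn := Real.sqrt_nonneg _
  have hs20 : 0 ≤ s2 := Real.sqrt_nonneg _
  have hsmsq : sm ^ 2 = (m:ℝ) := Real.sq_sqrt (by positivity)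
  have hsnsq : sn ^ 2 = (n:ℝ) := Real.sq_sqrt (by positivity)
  have hs2sq : s2 ^ 2 = 2 := Real.sq_sqrt (by norm_num)
  have hsmle : sm ≤ (m:ℝ) := sqrt_le_self_of_one_le hm'
  have hsnle : sn ≤ (n:ℝ) := sqrt_le_self_of_one_le hn'
  have hs2le : s2 ≤ 3/2 := sqrt_two_le
  have hell0s : enorm2 (ell0 A μ r₀ (xs, ys)) ≤ sm + μ * s2 := by
    have h1 : enorm2 (A.mulVec ys) ≤ sm := by
      apply enorm2_le_of_sqnorm_le _ hsm0
      rw [hsmsq]; exact sqnorm_mulVec_simplex_le A hA hys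
    have h2 : enorm2 (xs - r₀) ≤ s2 := by
      apply enorm2_le_of_sqnorm_le _ hs20
      rw [hs2sq]; exact sqnorm_sub_le_two_of_simplex hxs hr₀
    have h3 : μ * enorm2 (xs - r₀) ≤ μ * s2 := mul_le_mul_of_nonneg_left h2 hμ.le
    calc enorm2 (ell0 A μ r₀ (xs, ys)) ≤ enorm2 (A.mulVec ys) + enorm2 (μ • (xs - r₀)) := by
          simp only [ell0]; exact enorm2_add_le _ _
      _ = enorm2 (A.mulVec ys) + μ * enorm2 (xs - r₀) := by rw [enorm2_smul, abs_of_pos hμ]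
      _ ≤ sm + μ * s2 := by linarith
  have hell1s : enorm2 (ell1 A μ r₁ (xs, ys)) ≤ sn + μ * s2 := by
    have h1 : enorm2 (A.transpose.mulVec xs) ≤ sn := by
      apply enorm2_le_of_sqnorm_le _ hsn0
      rw [hsnsq]
      exact sqnorm_mulVec_simplex_le A.transpose (fun j i => hA i j) hxs
    have h2 : enorm2 (ys - r₁) ≤ s2 := by
      apply enorm2_le_of_sqnorm_le _ hs20
      rw [hs2sq]; exact sqnorm_sub_le_two_of_simplex hys hr₁
    have h3 : μ * enorm2 (ys - r₁) ≤ μ * s2 := mul_le_mul_of_nonneg_left h2 hμ.le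
    calc enorm2 (ell1 A μ r₁ (xs, ys)) ≤ enorm2 (-(A.transpose.mulVec xs)) +
            enorm2 (μ • (ys - r₁)) := by
          simp only [ell1]; exact enorm2_add_le _ _
      _ = enorm2 (A.transpose.mulVec xs) + μ * enorm2 (ys - r₁) := by
          rw [enorm2_neg, enorm2_smul, abs_of_pos hμ]
      _ ≤ sn + μ * s2 := by linarith
  -- scalar differences
  set δ₀ : ℝ := ip (ell0 A μ r₀ (x, y)) x - ip (ell0 A μ r₀ (xs, ys)) xs with hδ₀
  set δ₁ : ℝ := ip (ell1 A μ r₁ (x, y)) y - ip (ell1 A μ r₁ (xs, ys)) ys with hδ₁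
  have hδ₀eq : δ₀ = ip L₀ x + ip (ell0 A μ r₀ (xs, ys)) (x - xs) := by
    rw [hδ₀, ← hL₀eq, ip_sub_left, ip_sub_right]; ring
  have hδ₁eq : δ₁ = ip L₁ y + ip (ell1 A μ r₁ (xs, ys)) (y - ys) := by
    rw [hδ₁, ← hL₁eq, ip_sub_left, ip_sub_right]; ring
  have hxn1 : enorm2 x ≤ 1 := enorm2_le_one_of_simplex hx
  have hyn1 : enorm2 y ≤ 1 := enorm2_le_one_of_simplex hy
  have hδ₀b : |δ₀| ≤ enorm2 L₀ + (sm + μ * s2) * a := by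
    rw [hδ₀eq]
    have e1 : |ip L₀ x| ≤ enorm2 L₀ := by
      calc |ip L₀ x| ≤ enorm2 L₀ * enorm2 x := abs_ip_le _ _
        _ ≤ enorm2 L₀ * 1 := mul_le_mul_of_nonneg_left hxn1 hL₀n0
        _ = enorm2 L₀ := mul_one _
    have e2 : |ip (ell0 A μ r₀ (xs, ys)) (x - xs)| ≤ (sm + μ * s2) * a := by
      calc |ip (ell0 A μ r₀ (xs, ys)) (x - xs)| ≤
            enorm2 (ell0 A μ r₀ (xs, ys)) * enorm2 (x - xs) := abs_ip_le _ _
        _ ≤ (sm + μ * s2) * a := mul_le_mul_of_nonneg_right hell0s ha0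
    calc |ip L₀ x + ip (ell0 A μ r₀ (xs, ys)) (x - xs)| ≤
          |ip L₀ x| + |ip (ell0 A μ r₀ (xs, ys)) (x - xs)| := abs_add_le _ _
      _ ≤ enorm2 L₀ + (sm + μ * s2) * a := by linarith
  have hδ₁b : |δ₁| ≤ enorm2 L₁ + (sn + μ * s2) * b := by
    rw [hδ₁eq]
    have e1 : |ip L₁ y| ≤ enorm2 L₁ := by
      calc |ip L₁ y| ≤ enorm2 L₁ * enorm2 y := abs_ip_le _ _
        _ ≤ enorm2 L₁ * 1 := mul_le_mul_of_nonneg_left hyn1 hL₁n0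
        _ = enorm2 L₁ := mul_one _
    have e2 : |ip (ell1 A μ r₁ (xs, ys)) (y - ys)| ≤ (sn + μ * s2) * b := by
      calc |ip (ell1 A μ r₁ (xs, ys)) (y - ys)| ≤
            enorm2 (ell1 A μ r₁ (xs, ys)) * enorm2 (y - ys) := abs_ip_le _ _
        _ ≤ (sn + μ * s2) * b := mul_le_mul_of_nonneg_right hell1s hb0
    calc |ip L₁ y + ip (ell1 A μ r₁ (xs, ys)) (y - ys)| ≤
          |ip L₁ y| + |ip (ell1 A μ r₁ (xs, ys)) (y - ys)| := abs_add_le _ _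
      _ ≤ enorm2 L₁ + (sn + μ * s2) * b := by linarith
  -- the mvec differences
  have hM₀ : mvec0 A μ r₀ (x, y) - mvec0 A μ r₀ (xs, ys) = δ₀ • (1 : Fin m → ℝ) - L₀ := by
    funext i
    have := congrFun hL₀eq i
    simp only [mvec0, Pi.sub_apply, Pi.smul_apply, Pi.one_apply, smul_eq_mul, hδ₀] at *
    linarith
  have hM₁ : mvec1 A μ r₁ (x, y) - mvec1 A μ r₁ (xs, ys) = δ₁ • (1 : Fin n → ℝ) - L₁ := by
    funext i
    have := congrFun hL₁eq i
    simp only [mvec1, Pi.sub_apply, Pi.smul_apply, Pi.one_apply, smul_eq_mul, hδ₁] at *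
    linarith
  set eM₀ : ℝ := enorm2 (mvec0 A μ r₀ (x, y) - mvec0 A μ r₀ (xs, ys)) with heM₀
  set eM₁ : ℝ := enorm2 (mvec1 A μ r₁ (x, y) - mvec1 A μ r₁ (xs, ys)) with heM₁
  have heM₀0 : 0 ≤ eM₀ := enorm2_nonneg _
  have heM₁0 : 0 ≤ eM₁ := enorm2_nonneg _
  have hM₀n : eM₀ ≤ |δ₀| * sm + enorm2 L₀ := by
    rw [heM₀, hM₀]
    have e : δ₀ • (1 : Fin m → ℝ) - L₀ = δ₀ • (1 : Fin m → ℝ) + -L₀ := by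
      funext i; simp [sub_eq_add_neg]
    rw [e]
    calc enorm2 (δ₀ • (1 : Fin m → ℝ) + -L₀) ≤
          enorm2 (δ₀ • (1 : Fin m → ℝ)) + enorm2 (-L₀) := enorm2_add_le _ _
      _ = |δ₀| * sm + enorm2 L₀ := by rw [enorm2_smul, enorm2_neg, enorm2_one]
  have hM₁n : eM₁ ≤ |δ₁| * sn + enorm2 L₁ := by
    rw [heM₁, hM₁]
    have e : δ₁ • (1 : Fin n → ℝ) - L₁ = δ₁ • (1 : Fin n → ℝ) + -L₁ := by
      funext i; simp [sub_eq_add_neg]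
    rw [e]
    calc enorm2 (δ₁ • (1 : Fin n → ℝ) + -L₁) ≤
          enorm2 (δ₁ • (1 : Fin n → ℝ)) + enorm2 (-L₁) := enorm2_add_le _ _
      _ = |δ₁| * sn + enorm2 L₁ := by rw [enorm2_smul, enorm2_neg, enorm2_one]
  -- coefficient bounds
  have hK₀ : eM₀ ≤ ((m:ℝ) + μ * ((5/2) * m + 1)) * a + ((m:ℝ) + 1) * (P/2) * b := by
    have t1 : |δ₀| * sm ≤ (enorm2 L₀ + (sm + μ * s2) * a) * sm :=
      mul_le_mul_of_nonneg_right hδ₀b hsm0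
    have t2 : (sm + 1) * enorm2 L₀ ≤ (sm + 1) * ((P/2) * b + μ * a) :=
      mul_le_mul_of_nonneg_left hL₀n (by linarith)
    -- eM₀ ≤ (sm+1) * enorm2 L₀ + (sm*sm + μ*s2*sm) * a
    have t3 : eM₀ ≤ (sm + 1) * enorm2 L₀ + (sm * sm + μ * s2 * sm) * a := by
      have e : (enorm2 L₀ + (sm + μ * s2) * a) * sm + enorm2 L₀ =
          (sm + 1) * enorm2 L₀ + (sm * sm + μ * s2 * sm) * a := by ring
      linarith
    have c1 : sm * sm + μ * s2 * sm + (sm + 1) * μ ≤ (m:ℝ) + μ * ((5/2) * m + 1) := by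
      have u1 : sm * sm = (m:ℝ) := by rw [← hsmsq]; ring
      have u2 : s2 * sm ≤ (3/2) * (m:ℝ) := by
        calc s2 * sm ≤ (3/2) * sm := mul_le_mul_of_nonneg_right hs2le hsm0
          _ ≤ (3/2) * (m:ℝ) := by linarith
      have u3 : μ * (s2 * sm) ≤ μ * ((3/2) * (m:ℝ)) := mul_le_mul_of_nonneg_left u2 hμ.le
      have u4 : (sm + 1) * μ ≤ ((m:ℝ) + 1) * μ := by
        apply mul_le_mul_of_nonneg_right _ hμ.le
        linarith
      have e : μ * s2 * sm = μ * (s2 * sm) := by ring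
      have e2 : (m:ℝ) + μ * ((3/2) * (m:ℝ)) + ((m:ℝ) + 1) * μ =
          (m:ℝ) + μ * ((5/2) * (m:ℝ) + 1) := by ring
      linarith only [u1, u3, u4, e, e2]
    have c1' : (sm * sm + μ * s2 * sm + (sm + 1) * μ) * a ≤
        ((m:ℝ) + μ * ((5/2) * m + 1)) * a := mul_le_mul_of_nonneg_right c1 ha0
    have c2 : (sm + 1) * (P/2) * b ≤ ((m:ℝ) + 1) * (P/2) * b := by
      apply mul_le_mul_of_nonneg_right _ hb0
      apply mul_le_mul_of_nonneg_right _ (by linarith)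
      linarith
    have e2 : (sm + 1) * ((P/2) * b + μ * a) =
        (sm + 1) * (P/2) * b + (sm + 1) * μ * a := by ring
    have e3 : (sm * sm + μ * s2 * sm) * a + (sm + 1) * μ * a =
        (sm * sm + μ * s2 * sm + (sm + 1) * μ) * a := by ring
    linarith
  have hK₁ : eM₁ ≤ ((n:ℝ) + μ * ((5/2) * n + 1)) * b + ((n:ℝ) + 1) * (P/2) * a := by
    have t1 : |δ₁| * sn ≤ (enorm2 L₁ + (sn + μ * s2) * b) * sn :=
      mul_le_mul_of_nonneg_right hδ₁b hsn0
    have t2 : (sn + 1) * enorm2 L₁ ≤ (sn + 1) * ((P/2) * a + μ * b) :=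
      mul_le_mul_of_nonneg_left hL₁n (by linarith)
    have t3 : eM₁ ≤ (sn + 1) * enorm2 L₁ + (sn * sn + μ * s2 * sn) * b := by
      have e : (enorm2 L₁ + (sn + μ * s2) * b) * sn + enorm2 L₁ =
          (sn + 1) * enorm2 L₁ + (sn * sn + μ * s2 * sn) * b := by ring
      linarith
    have c1 : sn * sn + μ * s2 * sn + (sn + 1) * μ ≤ (n:ℝ) + μ * ((5/2) * n + 1) := by
      have u1 : sn * sn = (n:ℝ) := by rw [← hsnsq]; ring
      have u2 : s2 * sn ≤ (3/2) * (n:ℝ) := by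
        calc s2 * sn ≤ (3/2) * sn := mul_le_mul_of_nonneg_right hs2le hsn0
          _ ≤ (3/2) * (n:ℝ) := by linarith
      have u3 : μ * (s2 * sn) ≤ μ * ((3/2) * (n:ℝ)) := mul_le_mul_of_nonneg_left u2 hμ.le
      have u4 : (sn + 1) * μ ≤ ((n:ℝ) + 1) * μ := by
        apply mul_le_mul_of_nonneg_right _ hμ.le
        linarith
      have e : μ * s2 * sn = μ * (s2 * sn) := by ring
      have e2 : (n:ℝ) + μ * ((3/2) * (n:ℝ)) + ((n:ℝ) + 1) * μ =
          (n:ℝ) + μ * ((5/2) * (n:ℝ) + 1) := by ring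
      linarith only [u1, u3, u4, e, e2]
    have c1' : (sn * sn + μ * s2 * sn + (sn + 1) * μ) * b ≤
        ((n:ℝ) + μ * ((5/2) * n + 1)) * b := mul_le_mul_of_nonneg_right c1 hb0
    have c2 : (sn + 1) * (P/2) * a ≤ ((n:ℝ) + 1) * (P/2) * a := by
      apply mul_le_mul_of_nonneg_right _ ha0
      apply mul_le_mul_of_nonneg_right _ (by linarith)
      linarith
    have e2 : (sn + 1) * ((P/2) * a + μ * b) =
        (sn + 1) * (P/2) * a + (sn + 1) * μ * b := by ring
    have e3 : (sn * sn + μ * s2 * sn) * b + (sn + 1) * μ * b =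
        (sn * sn + μ * s2 * sn + (sn + 1) * μ) * b := by ring
    linarith
  -- total
  set C₀ : ℝ := 2 * P ^ 2 + 3 * μ * P + P + μ with hC₀
  have hC₀pos : 0 < C₀ := by
    rw [hC₀]
    have hPpos : (0:ℝ) < P := by linarith
    nlinarith only [hPpos, hμ, mul_pos hPpos hPpos, mul_pos hμ hPpos]
  set Ka : ℝ := (m:ℝ) + μ * ((5/2) * m + 1) + ((n:ℝ) + 1) * (P/2) with hKa
  set Kb : ℝ := (n:ℝ) + μ * ((5/2) * n + 1) + ((m:ℝ) + 1) * (P/2) with hKb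
  have hKa0 : 0 ≤ Ka := by rw [hKa]; positivity
  have hKb0 : 0 ≤ Kb := by rw [hKb]; positivity
  have h1 : eM₀ + eM₁ ≤ Ka * a + Kb * b := by rw [hKa, hKb]; linarith
  have h2 : Ka * a + Kb * b ≤ (Ka + Kb) * s := by
    have w1 := mul_le_mul_of_nonneg_left has hKa0
    have w2 := mul_le_mul_of_nonneg_left hbs hKb0
    linarith
  have h3 : Ka + Kb ≤ C₀ := by
    rw [hKa, hKb, hC₀]
    rw [hPdef]
    have w1 : 0 ≤ μ * ((m:ℝ) + (n:ℝ) - 2) := mul_nonneg hμ.le (by linarith)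
    nlinarith only [w1, hm', hn', hμ.le]
  have hKsum : eM₀ + eM₁ ≤ C₀ * s := by
    have h4 : (Ka + Kb) * s ≤ C₀ * s := mul_le_mul_of_nonneg_right h3 hs0
    linarith
  have hsq₀ : eM₀ ^ 2 = sqnorm (mvec0 A μ r₀ (x, y) - mvec0 A μ r₀ (xs, ys)) := enorm2_sq _
  have hsq₁ : eM₁ ^ 2 = sqnorm (mvec1 A μ r₁ (x, y) - mvec1 A μ r₁ (xs, ys)) := enorm2_sq _
  rw [← hsq₀, ← hsq₁, ← hssq]
  calc eM₀ ^ 2 + eM₁ ^ 2 ≤ (eM₀ + eM₁) ^ 2 := by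
        nlinarith only [mul_nonneg heM₀0 heM₁0]
    _ ≤ (C₀ * s) ^ 2 := pow_le_pow_left₀ (add_nonneg heM₀0 heM₁0) hKsum 2
    _ = C₀ ^ 2 * s ^ 2 := by ring
end chunk4
section chunk5
variable {m n : ℕ}

lemma sqnorm_sub_comm {d : ℕ} (u v : Fin d → ℝ) : sqnorm (u - v) = sqnorm (v - u) := by
  rw [sqnorm_sub_expand, sqnorm_sub_expand, ip_comm]; ring

lemma strat_fst (p : (Fin m → ℝ) × (Fin n → ℝ)) :
    (strat p).1 = (∑ i, |p.1 i|)⁻¹ • p.1 := rfl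

lemma strat_snd (p : (Fin m → ℝ) × (Fin n → ℝ)) :
    (strat p).2 = (∑ j, |p.2 j|)⁻¹ • p.2 := rfl

lemma abs_sum_pos {d : ℕ} {w : Fin d → ℝ} (hw : ∀ i, 0 ≤ w i) (hw0 : w ≠ 0) :
    0 < ∑ i, |w i| := by
  obtain ⟨a, ha⟩ := Function.ne_iff.1 hw0
  have ha' : 0 < |w a| := by
    simp only [Pi.zero_apply] at ha
    exact abs_pos.2 ha
  calc (0:ℝ) < |w a| := ha'
    _ ≤ ∑ i, |w i| := Finset.single_le_sum (f := fun i => |w i|) (fun i _ => abs_nonneg _) (Finset.mem_univ a)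

lemma strat_mem {d : ℕ} {w : Fin d → ℝ} (hw : ∀ i, 0 ≤ w i) (hw0 : w ≠ 0) :
    (∑ i, |w i|)⁻¹ • w ∈ stdSimplex ℝ (Fin d) := by
  have hS : 0 < ∑ i, |w i| := abs_sum_pos hw hw0
  have hSw : ∑ i, |w i| = ∑ i, w i :=
    Finset.sum_congr rfl fun i _ => abs_of_nonneg (hw i)
  constructor
  · intro i
    exact mul_nonneg (inv_nonneg.2 hS.le) (hw i)
  · have : ∑ i, ((∑ j, |w j|)⁻¹ • w) i = (∑ j, |w j|)⁻¹ * ∑ i, w i := by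
      simp [Finset.mul_sum]
    rw [this, ← hSw]
    field_simp
 
lemma ip_mvec_theta_zero {d : ℕ} (ℓ w : Fin d → ℝ) (hw : ∀ i, 0 ≤ w i) (hw0 : w ≠ 0) :
    ip ((ip ℓ ((∑ i, |w i|)⁻¹ • w)) • (1 : Fin d → ℝ) - ℓ) w = 0 := by
  have hS : 0 < ∑ i, |w i| := abs_sum_pos hw hw0
  have hSw : ∑ i, |w i| = ∑ i, w i :=
    Finset.sum_congr rfl fun i _ => abs_of_nonneg (hw i)
  have h1 : ip (1 : Fin d → ℝ) w = ∑ i, w i := by simp [ip]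
  rw [ip_sub_left, ip_smul_left, ip_smul_right, h1, ← hSw]
  field_simp
  ring

lemma proj_pointwise (c w : ℝ) (hc : 0 ≤ c) :
    (c - max w 0) ^ 2 + (max w 0 - w) ^ 2 ≤ (c - w) ^ 2 := by
  rcases le_or_gt 0 w with h | h
  · rw [max_eq_left h]; simp
  · rw [max_eq_right h.le]; nlinarith

lemma proj_sqnorm {d : ℕ} (ξ w θ' : Fin d → ℝ) (hξ : ∀ i, 0 ≤ ξ i)
    (hθ' : ∀ i, θ' i = max (w i) 0) :
    sqnorm (ξ - θ') + sqnorm (θ' - w) ≤ sqnorm (ξ - w) := by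
  simp only [sqnorm, Pi.sub_apply, ← Finset.sum_add_distrib]
  refine Finset.sum_le_sum fun i _ => ?_
  rw [hθ' i]
  exact proj_pointwise (ξ i) (w i) (hξ i)

lemma mono_sum (A : Matrix (Fin m) (Fin n) ℝ) (μ : ℝ) (r₀ : Fin m → ℝ) (r₁ : Fin n → ℝ)
    (x xs : Fin m → ℝ) (y ys : Fin n → ℝ) :
    ip (ell0 A μ r₀ (x, y)) (x - xs) + ip (ell1 A μ r₁ (x, y)) (y - ys) =
      ip (ell0 A μ r₀ (xs, ys)) (x - xs) + ip (ell1 A μ r₁ (xs, ys)) (y - ys) +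
        μ * (sqnorm (x - xs) + sqnorm (y - ys)) := by
  have hL₀eq : ell0 A μ r₀ (x, y) - ell0 A μ r₀ (xs, ys) =
      A.mulVec (y - ys) + μ • (x - xs) := by
    funext i
    simp [ell0, Matrix.mulVec_sub]
    ring
  have hL₁eq : ell1 A μ r₁ (x, y) - ell1 A μ r₁ (xs, ys) =
      -(A.transpose.mulVec (x - xs)) + μ • (y - ys) := by
    funext i
    simp [ell1, Matrix.mulVec_sub]
    ring
  have e0 : ip (ell0 A μ r₀ (x, y)) (x - xs) - ip (ell0 A μ r₀ (xs, ys)) (x - xs) =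
      ip (A.mulVec (y - ys)) (x - xs) + μ * sqnorm (x - xs) := by
    rw [← ip_sub_left, hL₀eq, ip_add_left, ip_smul_left, ip_self]
  have e1 : ip (ell1 A μ r₁ (x, y)) (y - ys) - ip (ell1 A μ r₁ (xs, ys)) (y - ys) =
      -(ip (A.transpose.mulVec (x - xs)) (y - ys)) + μ * sqnorm (y - ys) := by
    rw [← ip_sub_left, hL₁eq, ip_add_left, ip_smul_left, ip_neg_left, ip_self]
  have swap : ip (A.mulVec (y - ys)) (x - xs) = ip (A.transpose.mulVec (x - xs)) (y - ys) := by
    rw [ip_comm, ip_mulVec_swap]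
  linarith [e0, e1, swap]

lemma saddle_ip_ge (A : Matrix (Fin m) (Fin n) ℝ) (μ : ℝ) (hμ : 0 < μ)
    (r₀ : Fin m → ℝ) (r₁ : Fin n → ℝ) {xs : Fin m → ℝ} {ys : Fin n → ℝ}
    (hs : IsSaddle A μ r₀ r₁ xs ys) {x : Fin m → ℝ} {y : Fin n → ℝ}
    (hx : x ∈ stdSimplex ℝ (Fin m)) (hy : y ∈ stdSimplex ℝ (Fin n)) :
    μ * (sqnorm (x - xs) + sqnorm (y - ys)) ≤
      ip (mvec0 A μ r₀ (x, y)) xs + ip (mvec1 A μ r₁ (x, y)) ys := by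
  have hxs1 : ∑ i, xs i = 1 := hs.1.2
  have hys1 : ∑ j, ys j = 1 := hs.2.1.2
  have e0 : ip (mvec0 A μ r₀ (x, y)) xs = ip (ell0 A μ r₀ (x, y)) (x - xs) := by
    simp only [mvec0]
    rw [ip_sub_left, ip_smul_left, ip_sub_right]
    have : ip (1 : Fin m → ℝ) xs = ∑ i, xs i := by simp [ip]
    rw [this, hxs1]
    ring
  have e1 : ip (mvec1 A μ r₁ (x, y)) ys = ip (ell1 A μ r₁ (x, y)) (y - ys) := by
    simp only [mvec1]
    rw [ip_sub_left, ip_smul_left, ip_sub_right]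
    have : ip (1 : Fin n → ℝ) ys = ∑ j, ys j := by simp [ip]
    rw [this, hys1]
    ring
  rw [e0, e1, mono_sum A μ r₀ r₁ x xs y ys]
  have v0 := saddle_vi0 A μ r₀ r₁ hμ hs hx
  have v1 := saddle_vi1 A μ r₀ r₁ hμ hs hy
  linarith
end chunk5
set_option maxHeartbeats 1000000 in
/-- along the reward-transformed RM+ dynamics with step size
`0 < η < 2μ/C₀²`, the potential `Φ` decreases at each step by at least
`C₁·½‖σ* − σ^t‖₂²`, where `C₁ = 2ημ − (ηC₀)²` and `σ*` is the unique saddle point of `f_r`. -/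
theorem rtrmplus_potential_decrease
    (m n : ℕ) (hm : 1 ≤ m) (hn : 1 ≤ n) (A : Matrix (Fin m) (Fin n) ℝ)
    (hA : ∀ i j, A i j ∈ Set.Icc (-1 : ℝ) 1)
    (μ : ℝ) (hμ : 0 < μ)
    (P C₀ : ℝ) (hP : P = ((m : ℝ) + (n : ℝ)))
    (hC₀ : C₀ = 2 * P ^ 2 + 3 * μ * P + P + μ)
    (r₀ : Fin m → ℝ) (r₁ : Fin n → ℝ)
    (hr₀ : r₀ ∈ stdSimplex ℝ (Fin m)) (hr₁ : r₁ ∈ stdSimplex ℝ (Fin n))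
    (xs : Fin m → ℝ) (ys : Fin n → ℝ) (hsaddle : IsSaddle A μ r₀ r₁ xs ys)
    (η : ℝ) (hη : 0 < η) (hηlt : η < 2 * μ / C₀ ^ 2)
    (C₁ : ℝ) (hC₁ : C₁ = 2 * η * μ - (η * C₀) ^ 2)
    (θ : ℕ → (Fin m → ℝ) × (Fin n → ℝ))
    (hinit_nonneg : (∀ a, 0 ≤ (θ 0).1 a) ∧ (∀ b, 0 ≤ (θ 0).2 b))
    (hinit_ne : (θ 0).1 ≠ 0 ∧ (θ 0).2 ≠ 0)
    (hrec : ∀ t, θ (t + 1) =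
      (fun a => max ((θ t).1 a + η * mvec0 A μ r₀ (strat (θ t)) a) 0,
       fun b => max ((θ t).2 b + η * mvec1 A μ r₁ (strat (θ t)) b) 0))
    (hnz : ∀ t, (θ t).1 ≠ 0 ∧ (θ t).2 ≠ 0) :
    ∀ t, Phi A μ r₀ r₁ η xs ys (θ (t + 1)) ≤
      Phi A μ r₀ r₁ η xs ys (θ t) -
        C₁ * ((1 / 2) * (sqnorm (xs - (strat (θ t)).1) + sqnorm (ys - (strat (θ t)).2))) := by
  intro t
  -- nonnegativity of the regret vectors
  have hnnall : ∀ s, (∀ a, 0 ≤ (θ s).1 a) ∧ (∀ b, 0 ≤ (θ s).2 b) := by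
    intro s
    induction s with
    | zero => exact hinit_nonneg
    | succ s _ =>
        rw [hrec s]
        exact ⟨fun a => le_max_right _ _, fun b => le_max_right _ _⟩
  obtain ⟨hnn0, hnn1⟩ := hnnall t
  -- notation
  set x : Fin m → ℝ := (strat (θ t)).1 with hxdef
  set y : Fin n → ℝ := (strat (θ t)).2 with hydef
  set θ₀ : Fin m → ℝ := (θ t).1 with hθ₀def
  set θ₁ : Fin n → ℝ := (θ t).2 with hθ₁def
  set g₀ : Fin m → ℝ := mvec0 A μ r₀ (strat (θ t)) with hg₀def
  set g₁ : Fin n → ℝ := mvec1 A μ r₁ (strat (θ t)) with hg₁def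
  set h₀ : Fin m → ℝ := -(mvec0 A μ r₀ (xs, ys)) with hh₀def
  set h₁ : Fin n → ℝ := -(mvec1 A μ r₁ (xs, ys)) with hh₁def
  set θ₀' : Fin m → ℝ := (θ (t+1)).1 with hθ₀'def
  set θ₁' : Fin n → ℝ := (θ (t+1)).2 with hθ₁'def
  have hx : x ∈ stdSimplex ℝ (Fin m) := by
    rw [hxdef, strat_fst]
    exact strat_mem hnn0 (hnz t).1
  have hy : y ∈ stdSimplex ℝ (Fin n) := by
    rw [hydef, strat_snd]
    exact strat_mem hnn1 (hnz t).2
  have hrecx : ∀ a, θ₀' a = max (θ₀ a + η * g₀ a) 0 := by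
    intro a
    rw [hθ₀'def, hrec t]
  have hrecy : ∀ b, θ₁' b = max (θ₁ b + η * g₁ b) 0 := by
    intro b
    rw [hθ₁'def, hrec t]
  -- orthogonality
  have hip0 : ip g₀ θ₀ = 0 := by
    rw [hg₀def, hθ₀def]
    exact ip_mvec_theta_zero (ell0 A μ r₀ (strat (θ t))) (θ t).1 hnn0 (hnz t).1
  have hip1 : ip g₁ θ₁ = 0 := by
    rw [hg₁def, hθ₁def]
    exact ip_mvec_theta_zero (ell1 A μ r₁ (strat (θ t))) (θ t).2 hnn1 (hnz t).2
  -- saddle point lower bound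
  set s2q : ℝ := sqnorm (x - xs) + sqnorm (y - ys) with hs2q
  have hs2q0 : 0 ≤ s2q := add_nonneg (sqnorm_nonneg _) (sqnorm_nonneg _)
  have hstrat_eta : strat (θ t) = (x, y) := by rw [hxdef, hydef]
  have hF : μ * s2q ≤ ip g₀ xs + ip g₁ ys := by
    rw [hg₀def, hg₁def, hstrat_eta, hs2q]
    exact saddle_ip_ge A μ hμ r₀ r₁ hsaddle hx hy
  -- Lipschitz bound
  have hgh₀ : g₀ + h₀ = mvec0 A μ r₀ (x, y) - mvec0 A μ r₀ (xs, ys) := by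
    rw [hg₀def, hh₀def, hstrat_eta]
    funext i; simp [sub_eq_add_neg]
  have hgh₁ : g₁ + h₁ = mvec1 A μ r₁ (x, y) - mvec1 A μ r₁ (xs, ys) := by
    rw [hg₁def, hh₁def, hstrat_eta]
    funext i; simp [sub_eq_add_neg]
  have hLip : sqnorm (g₀ + h₀) + sqnorm (g₁ + h₁) ≤ C₀ ^ 2 * s2q := by
    rw [hgh₀, hgh₁, hC₀, hP, hs2q]
    exact lipschitz_m hm hn A hA μ hμ r₀ r₁ hr₀ hr₁ hx hsaddle.1 hy hsaddle.2.1
  have hE' : η ^ 2 * (sqnorm (g₀ + h₀) + sqnorm (g₁ + h₁)) ≤ η ^ 2 * (C₀ ^ 2 * s2q) :=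
    mul_le_mul_of_nonneg_left hLip (sq_nonneg η)
  -- the per-k decrease
  have key : ∀ k : ℝ, 1 ≤ k →
      (1 / 2) * (sqnorm (k • xs - θ₀') + sqnorm (k • ys - θ₁')) +
        η * (ip h₀ θ₀' + ip h₁ θ₁') ≤
      (1 / 2) * (sqnorm (k • xs - θ₀) + sqnorm (k • ys - θ₁)) +
        η * (ip h₀ θ₀ + ip h₁ θ₁) - C₁ * ((1 / 2) * s2q) := by
    intro k hk
    set w₀ : Fin m → ℝ := θ₀ + η • g₀ with hw₀def
    set w₁ : Fin n → ℝ := θ₁ + η • g₁ with hw₁def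
    set u₀ : Fin m → ℝ := θ₀' - w₀ with hu₀def
    set u₁ : Fin n → ℝ := θ₁' - w₁ with hu₁def
    -- projection inequality
    have hproj₀ : sqnorm (k • xs - θ₀') + sqnorm u₀ ≤ sqnorm (k • xs - w₀) := by
      have h1 : sqnorm u₀ = sqnorm (θ₀' - w₀) := by rw [hu₀def]
      rw [h1]
      apply proj_sqnorm
      · intro i
        exact mul_nonneg (by linarith) (hsaddle.1.1 i)
      · intro i
        rw [hrecx i, hw₀def]
        simp
    have hproj₁ : sqnorm (k • ys - θ₁') + sqnorm u₁ ≤ sqnorm (k • ys - w₁) := by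
      have h1 : sqnorm u₁ = sqnorm (θ₁' - w₁) := by rw [hu₁def]
      rw [h1]
      apply proj_sqnorm
      · intro j
        exact mul_nonneg (by linarith) (hsaddle.2.1.1 j)
      · intro j
        rw [hrecy j, hw₁def]
        simp
    -- expansion
    have hexp₀ : sqnorm (k • xs - w₀) =
        sqnorm (k • xs - θ₀) - 2 * (η * (k * ip g₀ xs)) + η ^ 2 * sqnorm g₀ := by
      have e : k • xs - w₀ = (k • xs - θ₀) - η • g₀ := by
        rw [hw₀def]; funext i; simp; ring
      rw [e, sqnorm_sub_expand, ip_smul_right, ip_sub_left, ip_smul_left, sqnorm_smul,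
        ip_comm θ₀ g₀, hip0, ip_comm xs g₀]
      ring
    have hexp₁ : sqnorm (k • ys - w₁) =
        sqnorm (k • ys - θ₁) - 2 * (η * (k * ip g₁ ys)) + η ^ 2 * sqnorm g₁ := by
      have e : k • ys - w₁ = (k • ys - θ₁) - η • g₁ := by
        rw [hw₁def]; funext j; simp; ring
      rw [e, sqnorm_sub_expand, ip_smul_right, ip_sub_left, ip_smul_left, sqnorm_smul,
        ip_comm θ₁ g₁, hip1, ip_comm ys g₁]
      ring
    -- linear term decomposition
    have hB₀ : ip h₀ θ₀' = ip h₀ θ₀ + ip h₀ u₀ + η * ip h₀ g₀ := by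
      have e : θ₀' = θ₀ + u₀ + η • g₀ := by
        rw [hu₀def, hw₀def]; funext i; simp; ring
      calc ip h₀ θ₀' = ip h₀ (θ₀ + u₀ + η • g₀) := by rw [← e]
        _ = ip h₀ θ₀ + ip h₀ u₀ + η * ip h₀ g₀ := by
            rw [ip_add_right, ip_add_right, ip_smul_right]
    have hB₁ : ip h₁ θ₁' = ip h₁ θ₁ + ip h₁ u₁ + η * ip h₁ g₁ := by
      have e : θ₁' = θ₁ + u₁ + η • g₁ := by
        rw [hu₁def, hw₁def]; funext j; simp; ring
      calc ip h₁ θ₁' = ip h₁ (θ₁ + u₁ + η • g₁) := by rw [← e]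
        _ = ip h₁ θ₁ + ip h₁ u₁ + η * ip h₁ g₁ := by
            rw [ip_add_right, ip_add_right, ip_smul_right]
    -- Cauchy–Schwarz / AM-GM
    have hC₀' : η * ip h₀ u₀ ≤ (1/2) * (η ^ 2 * sqnorm h₀) + (1/2) * sqnorm u₀ := by
      have := ip_le_half_sq (η • h₀) u₀
      rw [ip_smul_left, sqnorm_smul] at this
      linarith
    have hC₁' : η * ip h₁ u₁ ≤ (1/2) * (η ^ 2 * sqnorm h₁) + (1/2) * sqnorm u₁ := by
      have := ip_le_half_sq (η • h₁) u₁
      rw [ip_smul_left, sqnorm_smul] at this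
      linarith
    -- expansion of the squared sum
    have hD₀ : η ^ 2 * sqnorm (g₀ + h₀) =
        η ^ 2 * sqnorm g₀ + 2 * (η ^ 2 * ip h₀ g₀) + η ^ 2 * sqnorm h₀ := by
      rw [sqnorm_add_expand, ip_comm g₀ h₀]; ring
    have hD₁ : η ^ 2 * sqnorm (g₁ + h₁) =
        η ^ 2 * sqnorm g₁ + 2 * (η ^ 2 * ip h₁ g₁) + η ^ 2 * sqnorm h₁ := by
      rw [sqnorm_add_expand, ip_comm g₁ h₁]; ring
    -- monotonicity term
    have hGnn : 0 ≤ ip g₀ xs + ip g₁ ys :=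
      le_trans (mul_nonneg hμ.le hs2q0) hF
    have hk' : ip g₀ xs + ip g₁ ys ≤ k * (ip g₀ xs + ip g₁ ys) :=
      le_mul_of_one_le_left hGnn hk
    have hkμ : η * (μ * s2q) ≤ η * (k * (ip g₀ xs + ip g₁ ys)) :=
      mul_le_mul_of_nonneg_left (le_trans hF hk') hη.le
    have hC₁eq : C₁ * ((1/2) * s2q) =
        η * (μ * s2q) - (1/2) * (η ^ 2 * (C₀ ^ 2 * s2q)) := by
      rw [hC₁]; ring
    have hB₀' : η * ip h₀ θ₀' = η * ip h₀ θ₀ + η * ip h₀ u₀ + η ^ 2 * ip h₀ g₀ := by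
      rw [hB₀]; ring
    have hB₁' : η * ip h₁ θ₁' = η * ip h₁ θ₁ + η * ip h₁ u₁ + η ^ 2 * ip h₁ g₁ := by
      rw [hB₁]; ring
    have T0 : 1/2 * sqnorm (k • xs - θ₀') + η * ip h₀ θ₀' ≤
        1/2 * sqnorm (k • xs - θ₀) + η * ip h₀ θ₀ - η*(k*ip g₀ xs) +
          1/2*(η^2*sqnorm (g₀+h₀)) := by
      linarith only [hproj₀, hexp₀, hB₀', hC₀', hD₀]
    have T1 : 1/2 * sqnorm (k • ys - θ₁') + η * ip h₁ θ₁' ≤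
        1/2 * sqnorm (k • ys - θ₁) + η * ip h₁ θ₁ - η*(k*ip g₁ ys) +
          1/2*(η^2*sqnorm (g₁+h₁)) := by
      linarith only [hproj₁, hexp₁, hB₁', hC₁', hD₁]
    clear_value s2q θ₀' θ₁' g₀ g₁ h₀ h₁ θ₀ θ₁ x y
    linarith only [T0, T1, hE', hkμ, hC₁eq]
  -- assemble via the infimum
  have hgoal2 : sqnorm (xs - x) + sqnorm (ys - y) = s2q := by
    rw [hs2q, sqnorm_sub_comm xs x, sqnorm_sub_comm ys y]
  simp only [Phi]
  rw [hgoal2]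
  set L : ℝ := η * (ip (-(mvec0 A μ r₀ (xs, ys))) θ₀ + ip (-(mvec1 A μ r₁ (xs, ys))) θ₁)
    with hLdef
  set L' : ℝ := η * (ip (-(mvec0 A μ r₀ (xs, ys))) θ₀' + ip (-(mvec1 A μ r₁ (xs, ys))) θ₁')
    with hL'def
  set S : Set ℝ := {v | ∃ k : ℝ, 1 ≤ k ∧
      v = (1 / 2) * (sqnorm (k • xs - θ₀) + sqnorm (k • ys - θ₁))} with hSdef
  set S' : Set ℝ := {v | ∃ k : ℝ, 1 ≤ k ∧
      v = (1 / 2) * (sqnorm (k • xs - θ₀') + sqnorm (k • ys - θ₁'))} with hS'def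
  have hbdd' : BddBelow S' := by
    refine ⟨0, ?_⟩
    rintro v ⟨k, hk, rfl⟩
    have := sqnorm_nonneg (k • xs - θ₀')
    have := sqnorm_nonneg (k • ys - θ₁')
    linarith
  have hne : S.Nonempty := ⟨_, 1, le_refl 1, rfl⟩
  have step1 : ∀ v ∈ S, sInf S' + L' ≤ v + L - C₁ * ((1/2) * s2q) := by
    rintro v ⟨k, hk, rfl⟩
    have h2 : sInf S' ≤ (1 / 2) * (sqnorm (k • xs - θ₀') + sqnorm (k • ys - θ₁')) :=
      csInf_le hbdd' ⟨k, hk, rfl⟩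
    have h3 := key k hk
    rw [hLdef, hL'def, ← hh₀def, ← hh₁def]
    linarith
  have step2 : sInf S' + L' + C₁ * ((1/2) * s2q) - L ≤ sInf S :=
    le_csInf hne fun v hv => by linarith [step1 v hv]
  linarith
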